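/- arXiv:1810.01610 — 6 statements merged into one kernel-verified Lean document; each statement's English description precedes it below -/
import Mathlib

section
/- Let L be a lattice with a least element, let a ∈ L be an atom of L that is also a neutral element of L, and let x ∈ L. Then x is a cancellable element of L if and only if x ⊔ a is a cancellable element of L. -/
/-- An element `x` of a lattice is cancellable if `x ⊔ y = x ⊔ z` and `x ⊓ y = x ⊓ z`
imply `y = z`. -/
def IsCancellable {L : Type*} [Lattice L] (x : L) : Prop :=
  ∀ y z : L, x ⊔ y = x ⊔ z → x ⊓ y = x ⊓ z → y = z

/-- An element `a` of a lattice is neutral. -/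
def IsNeutral {L : Type*} [Lattice L] (a : L) : Prop :=
  ∀ y z : L, (a ⊔ y) ⊓ (y ⊔ z) ⊓ (z ⊔ a) = (a ⊓ y) ⊔ (y ⊓ z) ⊔ (z ⊓ a)

section Aux

variable {L : Type*} [Lattice L] [OrderBot L] {a : L}

lemma atom_inf_cases (ha : IsAtom a) (u : L) : a ⊓ u = ⊥ ∨ a ≤ u := by
  by_cases h : a ≤ u
  · exact Or.inr h
  · refine Or.inl (ha.2 _ (lt_of_le_of_ne inf_le_left ?_))
    intro he
    exact h (by rw [← he]; exact inf_le_right)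

/-- `(a ⊔ u) ⊓ v = (a ⊓ v) ⊔ (u ⊓ v)` for an atom `a` that is neutral. -/
lemma I3 (ha : IsAtom a) (hn : IsNeutral a) (u v : L) :
    (a ⊔ u) ⊓ v = (a ⊓ v) ⊔ (u ⊓ v) := by
  rcases atom_inf_cases ha u with hu | hu
  · rcases atom_inf_cases ha v with hv | hv
    · -- both meets ⊥
      rw [hv, bot_sup_eq]
      apply le_antisymm
      · have h1 : (a ⊔ u) ⊓ v ≤ (a ⊔ u) ⊓ (u ⊔ v) ⊓ (v ⊔ a) :=
          le_inf (le_inf inf_le_left (le_trans inf_le_right le_sup_right))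
            (le_trans inf_le_right le_sup_left)
        rw [hn u v, hu, bot_sup_eq, inf_comm v a, hv, sup_bot_eq] at h1
        exact h1
      · exact le_inf (le_trans inf_le_left le_sup_right) inf_le_right
    · -- a ≤ v
      have hm := hn u v
      rw [sup_eq_left.mpr hv, inf_comm v a, inf_eq_left.mpr hv] at hm
      have h2 : (a ⊔ u) ⊓ (u ⊔ v) ⊓ v = (a ⊔ u) ⊓ v := by
        rw [inf_assoc, inf_eq_right.mpr (le_sup_right : v ≤ u ⊔ v)]
      rw [h2] at hm
      have h3 : a ⊓ u ⊔ u ⊓ v ⊔ a = a ⊔ u ⊓ v := by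
        rw [sup_comm, ← sup_assoc, sup_eq_left.mpr (inf_le_left : a ⊓ u ≤ a)]
      rw [h3] at hm
      rw [hm, inf_eq_left.mpr hv]
  · -- a ≤ u
    rw [sup_eq_right.mpr hu, sup_eq_right.mpr (inf_le_inf_right v hu)]

/-- `a ⊓ (u ⊔ v) = (a ⊓ u) ⊔ (a ⊓ v)` for an atom `a` that is neutral. -/
lemma I1 (ha : IsAtom a) (hn : IsNeutral a) (u v : L) :
    a ⊓ (u ⊔ v) = (a ⊓ u) ⊔ (a ⊓ v) := by
  rcases atom_inf_cases ha u with hu | hu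
  · rcases atom_inf_cases ha v with hv | hv
    · rw [hu, hv, sup_bot_eq]
      rcases atom_inf_cases ha (u ⊔ v) with h | h
      · exact h
      · -- a ≤ u ⊔ v leads to contradiction
        exfalso
        have hm := hn u v
        have hle : a ≤ (a ⊔ u) ⊓ (u ⊔ v) ⊓ (v ⊔ a) :=
          le_inf (le_inf le_sup_left h) le_sup_right
        rw [hm, hu, bot_sup_eq, inf_comm v a, hv, sup_bot_eq] at hle
        have hau : a ≤ a ⊓ u := le_inf le_rfl (le_trans hle inf_le_left)
        rw [hu] at hau
        exact ha.1 (le_bot_iff.mp hau)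
    · rw [inf_eq_left.mpr hv, inf_eq_left.mpr (le_trans hv le_sup_right),
        sup_eq_right.mpr (inf_le_left : a ⊓ u ≤ a)]
  · rw [inf_eq_left.mpr hu, inf_eq_left.mpr (le_trans hu le_sup_left),
      sup_eq_left.mpr (inf_le_left : a ⊓ v ≤ a)]

/-- A neutral atom is cancellable. -/
lemma cancel_a (ha : IsAtom a) (hn : IsNeutral a) {u v : L}
    (h1 : a ⊔ u = a ⊔ v) (h2 : a ⊓ u = a ⊓ v) : u = v := by
  have key : ∀ p q : L, a ⊔ p = a ⊔ q → a ⊓ p = a ⊓ q → p ≤ q := by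
    intro p q hs hi
    have hp : p = (a ⊔ q) ⊓ p := by rw [← hs, inf_eq_right.mpr le_sup_right]
    rw [hp, I3 ha hn, hi]
    exact sup_le inf_le_right inf_le_left
  exact le_antisymm (key u v h1 h2) (key v u h1.symm h2.symm)

end Aux

theorem stmt0 {L : Type*} [Lattice L] [OrderBot L] (a x : L)
    (ha_atom : IsAtom a) (ha_neutral : IsNeutral a) :
    IsCancellable x ↔ IsCancellable (x ⊔ a) := by
  by_cases hax : a ≤ x
  · rw [sup_eq_left.mpr hax]
  · have hax' : a ⊓ x = ⊥ := (atom_inf_cases ha_atom x).resolve_right hax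
    have hI3 := I3 ha_atom ha_neutral
    have hI1 := I1 ha_atom ha_neutral
    have hinf : ∀ w : L, (x ⊔ a) ⊓ w = (a ⊓ w) ⊔ (x ⊓ w) := by
      intro w; rw [sup_comm x a, hI3]
    have hax2 : ∀ w : L, a ⊓ (x ⊔ w) = a ⊓ w := by
      intro w; rw [hI1, hax', bot_sup_eq]
    constructor
    · intro hc y z h1 h2
      -- Step: a ⊓ y = a ⊓ z
      have hay : a ⊓ y = a ⊓ z := by
        rcases atom_inf_cases ha_atom y with hy | hy
        · rcases atom_inf_cases ha_atom z with hz | hz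
          · rw [hy, hz]
          · exfalso
            have h3 : a ≤ (x ⊔ a) ⊓ y := by
              rw [h2]; exact le_inf le_sup_right hz
            have h4 : a ≤ a ⊓ y := le_inf le_rfl (le_trans h3 inf_le_right)
            rw [hy] at h4
            exact ha_atom.1 (le_bot_iff.mp h4)
        · rcases atom_inf_cases ha_atom z with hz | hz
          · exfalso
            have h3 : a ≤ (x ⊔ a) ⊓ z := by
              rw [← h2]; exact le_inf le_sup_right hy
            have h4 : a ≤ a ⊓ z := le_inf le_rfl (le_trans h3 inf_le_right)
            rw [hz] at h4
            exact ha_atom.1 (le_bot_iff.mp h4)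
          · rw [inf_eq_left.mpr hy, inf_eq_left.mpr hz]
      -- Step A : x ⊓ y = x ⊓ z
      have hA : x ⊓ y = x ⊓ z := by
        have h2' : (a ⊓ y) ⊔ (x ⊓ y) = (a ⊓ z) ⊔ (x ⊓ z) := by
          rw [← hinf, ← hinf, h2]
        rcases atom_inf_cases ha_atom y with hy | hy
        · rw [hy, ← hay, hy, bot_sup_eq, bot_sup_eq] at h2'
          exact h2'
        · rw [inf_eq_left.mpr hy, ← hay, inf_eq_left.mpr hy] at h2'
          refine cancel_a ha_atom ha_neutral h2' ?_
          have e1 : a ⊓ (x ⊓ y) = ⊥ := by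
            apply le_bot_iff.mp
            rw [← hax']
            exact le_inf inf_le_left (le_trans inf_le_right inf_le_left)
          have e2 : a ⊓ (x ⊓ z) = ⊥ := by
            apply le_bot_iff.mp
            rw [← hax']
            exact le_inf inf_le_left (le_trans inf_le_right inf_le_left)
          rw [e1, e2]
      -- Step B : x ⊔ y = x ⊔ z
      have hB : x ⊔ y = x ⊔ z := by
        have h1' : a ⊔ (x ⊔ y) = a ⊔ (x ⊔ z) := by
          rw [sup_comm a (x ⊔ y), sup_comm a (x ⊔ z), sup_assoc, sup_assoc,
            sup_comm y a, sup_comm z a, ← sup_assoc, ← sup_assoc]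
          exact h1
        refine cancel_a ha_atom ha_neutral h1' ?_
        rw [hax2, hax2, hay]
      exact hc y z hB hA
    · intro hc y z h1 h2
      refine hc y z ?_ ?_
      · rw [sup_assoc, sup_comm a y, ← sup_assoc, h1, sup_assoc, sup_comm z a,
          ← sup_assoc]
      · have hay : a ⊓ y = a ⊓ z := by rw [← hax2, ← hax2 z, h1]
        rw [hinf, hinf, hay, h2]
end

section
/- Let L be a lattice with a least element, let a ∈ L be an atom of L that is also a neutral element of L, and let x ∈ L. Then x is a cancellable element of L if and only if for all y, z ∈ L with a ≤ y and a ≤ z, the equalities x ⊔ y = x ⊔ z and x ⊓ y = x ⊓ z imply y = z. -/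
/-- Neutral elements can be cancelled. -/
lemma neutral_cancel {L : Type*} [Lattice L] {a : L} (hn : IsNeutral a)
    {y z : L} (hj : a ⊔ y = a ⊔ z) (hm : a ⊓ y = a ⊓ z) : y = z := by
  have med := hn y z
  have hy : y = (a ⊔ y) ⊓ (y ⊔ z) ⊓ (z ⊔ a) := by
    apply le_antisymm
    · refine le_inf (le_inf le_sup_right le_sup_left) ?_
      rw [sup_comm z a, ← hj]; exact le_sup_right
    · rw [med]
      refine sup_le (sup_le inf_le_right inf_le_left) ?_
      rw [inf_comm z a, ← hm]; exact inf_le_right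
  have hz : z = (a ⊔ y) ⊓ (y ⊔ z) ⊓ (z ⊔ a) := by
    apply le_antisymm
    · refine le_inf (le_inf ?_ le_sup_right) le_sup_left
      rw [hj]; exact le_sup_right
    · rw [med]
      refine sup_le (sup_le ?_ inf_le_right) inf_le_left
      rw [hm]; exact inf_le_right
  rw [hy, ← hz]

/-- For a neutral atom `a`, `x ⊓ (y ⊔ a) = (x ⊓ y) ⊔ (x ⊓ a)`. -/
lemma atom_dist {L : Type*} [Lattice L] [OrderBot L] {a : L}
    (ha : IsAtom a) (hn : IsNeutral a) (x y : L) :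
    x ⊓ (y ⊔ a) = (x ⊓ y) ⊔ (x ⊓ a) := by
  rcases (ha.le_iff.mp (inf_le_left : a ⊓ y ≤ a)) with h | h
  · -- a ⊓ y = ⊥
    have med := hn x y
    have key : x ⊓ (y ⊔ a) = x ⊓ ((a ⊔ x) ⊓ (x ⊔ y) ⊓ (y ⊔ a)) := by
      apply le_antisymm
      · exact le_inf inf_le_left (le_inf (le_inf
          (le_trans inf_le_left le_sup_right) (le_trans inf_le_left le_sup_left))
          inf_le_right)
      · exact inf_le_inf_left x inf_le_right
    rw [key, med, inf_comm y a, h, sup_bot_eq]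
    have hle : a ⊓ x ⊔ x ⊓ y ≤ x := sup_le inf_le_right inf_le_left
    rw [inf_eq_right.mpr hle, inf_comm a x, sup_comm]
  · -- a ≤ y
    have hay : a ≤ y := h ▸ (inf_le_right : a ⊓ y ≤ y)
    rw [sup_eq_left.mpr hay, sup_eq_left.mpr (inf_le_inf_left x hay)]

theorem stmt1 {L : Type*} [Lattice L] [OrderBot L] (a x : L)
    (ha_atom : IsAtom a) (ha_neutral : IsNeutral a) :
    IsCancellable x ↔
      ∀ y z : L, a ≤ y → a ≤ z → x ⊔ y = x ⊔ z → x ⊓ y = x ⊓ z → y = z := by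
  constructor
  · intro h y z _ _ hj hm; exact h y z hj hm
  · intro h y z hj hm
    -- Step 1: y ⊔ a and z ⊔ a coincide
    have hja : x ⊔ (y ⊔ a) = x ⊔ (z ⊔ a) := by
      rw [← sup_assoc, ← sup_assoc, hj]
    have hma : x ⊓ (y ⊔ a) = x ⊓ (z ⊔ a) := by
      rw [atom_dist ha_atom ha_neutral, atom_dist ha_atom ha_neutral, hm]
    have hya : y ⊔ a = z ⊔ a :=
      h (y ⊔ a) (z ⊔ a) le_sup_right le_sup_right hja hma
    -- dichotomy for atoms
    have dich : ∀ p : L, a ⊓ p = ⊥ ∨ a ≤ p := fun p => by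
      rcases ha_atom.le_iff.mp (inf_le_left : a ⊓ p ≤ a) with hh | hh
      · exact Or.inl hh
      · exact Or.inr (hh ▸ (inf_le_right : a ⊓ p ≤ p))
    -- mixed case is impossible
    have mixed : ∀ u v : L, a ≤ u → a ⊓ v = ⊥ → x ⊔ u = x ⊔ v → x ⊓ u = x ⊓ v → False := by
      intro u v hau havb hju hmu
      have hax : a ⊓ x = ⊥ := by
        rcases dich x with hh | hh
        · exact hh
        · have : a ≤ v := le_trans (le_inf hh hau) (hmu ▸ inf_le_right)
          have : a ≤ a ⊓ v := le_inf le_rfl this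
          exact absurd (le_bot_iff.mp (havb ▸ this)) ha_atom.1
      have haxv : a ≤ x ⊔ v := hju ▸ le_trans hau le_sup_right
      have med := ha_neutral x v
      have hle : a ≤ (a ⊔ x) ⊓ (x ⊔ v) ⊓ (v ⊔ a) :=
        le_inf (le_inf le_sup_left haxv) le_sup_right
      rw [med, hax, inf_comm v a, havb, bot_sup_eq, sup_bot_eq] at hle
      have : a ≤ v := le_trans hle inf_le_right
      have : a ≤ a ⊓ v := le_inf le_rfl this
      exact absurd (le_bot_iff.mp (havb ▸ this)) ha_atom.1
    rcases dich y with hy0 | hay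
    · rcases dich z with hz0 | haz
      · -- neither: cancel a via neutrality
        refine neutral_cancel ha_neutral ?_ ?_
        · rw [sup_comm a y, sup_comm a z, hya]
        · rw [hy0, hz0]
      · exact absurd (mixed z y haz hy0 hj.symm hm.symm) not_false
    · rcases dich z with hz0 | haz
      · exact absurd (mixed y z hay hz0 hj hm) not_false
      · rw [← sup_eq_left.mpr hay, ← sup_eq_left.mpr haz, sup_comm y a, sup_comm z a,
          sup_comm a y, sup_comm a z, hya]
end

section
/- Let n be a natural number and let G be a subgroup of the symmetric group S_n of all permutations of an n-element set. Then G is a cancellable element of the lattice of all subgroups of S_n (ordered by inclusion, with meet the intersection and join the subgroup generated by the union) if and only if G is either the trivial subgroup or the whole group S_n. -/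
open Equiv Equiv.Perm Subgroup

lemma mem_closure_involution {M : Type*} [Group M] {a x : M} (ha : a * a = 1)
    (hx : x ∈ Subgroup.closure {a}) : x = 1 ∨ x = a := by
  induction hx using Subgroup.closure_induction with
  | mem y hy => exact Or.inr (by simpa using hy)
  | one => exact Or.inl rfl
  | mul x y hx hy ihx ihy =>
    rcases ihx with rfl | rfl <;> rcases ihy with rfl | rfl <;> simp [ha]
  | inv x hx ih =>
    rcases ih with rfl | rfl
    · simp
    · right
      rw [inv_eq_iff_mul_eq_one, ha]

/-- Under the "all swaps outside G are centralized" hypothesis, all swaps are in G. -/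
lemma all_swaps_mem {n : ℕ} (G : Subgroup (Perm (Fin n)))
    (H : ∀ a b : Fin n, a ≠ b → Equiv.swap a b ∉ G → ∀ g ∈ G,
      Equiv.swap (g a) (g b) = Equiv.swap a b)
    {g : Perm (Fin n)} (hg : g ∈ G) {i : Fin n} (hi : g i ≠ i)
    (h3 : ∃ k : Fin n, k ≠ i ∧ k ≠ g i) :
    ∀ a b : Fin n, a ≠ b → Equiv.swap a b ∈ G := by
  set j := g i with hj
  -- Step A: swaps (i k) with k ∉ {i, j}
  have stepA : ∀ k : Fin n, k ≠ i → k ≠ j → Equiv.swap i k ∈ G := by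
    intro k hki hkj
    by_contra hmem
    have := H i k (Ne.symm hki) hmem g hg
    have hgk : Equiv.swap (g i) (g k) j = Equiv.swap i k j := by rw [this]
    rw [Equiv.swap_apply_left] at hgk
    rw [Equiv.swap_apply_of_ne_of_ne hi (Ne.symm hkj)] at hgk
    exact hki (g.injective hgk)
  obtain ⟨k, hki, hkj⟩ := h3
  -- Step B: swap i j ∈ G
  have stepB : Equiv.swap i j ∈ G := by
    by_contra hmem
    have ht : Equiv.swap i k ∈ G := stepA k hki hkj
    have := H i j (Ne.symm hi) hmem (Equiv.swap i k) ht
    rw [Equiv.swap_apply_left, Equiv.swap_apply_of_ne_of_ne hi (Ne.symm hkj)] at this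
    have := congrArg (fun e => e j) this
    simp only [Equiv.swap_apply_right] at this
    exact hki this
  have stepAB : ∀ l : Fin n, l ≠ i → Equiv.swap i l ∈ G := by
    intro l hl
    by_cases hlj : l = j
    · exact hlj ▸ stepB
    · exact stepA l hl hlj
  -- Step C: all swaps
  intro a b hab
  by_cases hai : a = i
  · exact hai ▸ stepAB b (hai ▸ hab).symm
  by_cases hbi : b = i
  · rw [Equiv.swap_comm]; exact hbi ▸ stepAB a (hbi ▸ hab)
  by_contra hmem
  have ht : Equiv.swap i a ∈ G := stepAB a hai
  have := H a b hab hmem (Equiv.swap i a) ht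
  rw [Equiv.swap_apply_right, Equiv.swap_apply_of_ne_of_ne hbi (Ne.symm hab)] at this
  have := congrArg (fun e => e i) this
  simp only [Equiv.swap_apply_left] at this
  rw [Equiv.swap_apply_of_ne_of_ne (Ne.symm hai) (Ne.symm hbi)] at this
  exact hbi this

theorem stmt2 (n : ℕ) (G : Subgroup (Equiv.Perm (Fin n))) :
    IsCancellable G ↔ G = ⊥ ∨ G = ⊤ := by
  constructor
  · intro hc
    by_contra hne
    push_neg at hne
    obtain ⟨hbot, htop⟩ := hne
    -- G nontrivial: some g ∈ G, g ≠ 1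
    obtain ⟨g, hgG, hg1⟩ : ∃ g ∈ G, g ≠ 1 := by
      by_contra h
      push_neg at h
      exact hbot (eq_bot_iff.mpr fun x hx => h x hx)
    -- find the key data: a swap τ ∉ G and g' ∈ G not centralizing it
    have key : ∃ (a b : Fin n), a ≠ b ∧ Equiv.swap a b ∉ G ∧
        ∃ g' ∈ G, Equiv.swap (g' a) (g' b) ≠ Equiv.swap a b := by
      by_contra h
      push_neg at h
      have H : ∀ a b : Fin n, a ≠ b → Equiv.swap a b ∉ G → ∀ g ∈ G,
          Equiv.swap (g a) (g b) = Equiv.swap a b := by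
        intro a b hab hm g' hg'
        exact h a b hab hm g' hg'
      obtain ⟨i, hi⟩ : ∃ i, g i ≠ i := by
        by_contra h'
        push_neg at h'
        exact hg1 (Equiv.ext fun x => h' x)
      have h3 : ∃ k : Fin n, k ≠ i ∧ k ≠ g i := by
        have hcard : 2 < n := by
          by_contra hle
          push_neg at hle
          interval_cases n
          · exact hi (Subsingleton.elim _ _)
          · exact hi (Subsingleton.elim _ _)
          · -- n = 2 : every nontrivial element equals swap; show G = ⊤
            apply htop
            rw [eq_top_iff, ← Equiv.Perm.closure_isSwap, Subgroup.closure_le]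
            rintro x ⟨a, b, hab, rfl⟩
            have key2 : ∀ (g : Equiv.Perm (Fin 2)) (a b : Fin 2),
                g ≠ 1 → a ≠ b → g = Equiv.swap a b := by decide
            exact key2 g a b hg1 hab ▸ hgG
        have hlt : ({i, g i} : Finset (Fin n)).card < (Finset.univ : Finset (Fin n)).card := by
          calc ({i, g i} : Finset (Fin n)).card ≤ 2 :=
                (Finset.card_insert_le _ _).trans (by simp)
          _ < n := hcard
          _ = (Finset.univ : Finset (Fin n)).card := by simp
        have hss : ({i, g i} : Finset (Fin n)) ⊂ Finset.univ :=
          Finset.ssubset_univ_iff.mpr (fun h => by rw [h] at hlt; exact lt_irrefl _ hlt)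
        obtain ⟨k, _, hk⟩ := Finset.exists_of_ssubset hss
        simp only [Finset.mem_insert, Finset.mem_singleton, not_or] at hk
        exact ⟨k, hk.1, hk.2⟩
      have := all_swaps_mem G H hgG hi h3
      apply htop
      rw [eq_top_iff, ← Equiv.Perm.closure_isSwap, Subgroup.closure_le]
      rintro x ⟨a, b, hab, rfl⟩
      exact this a b hab
    obtain ⟨a, b, hab, hτG, g', hg'G, hτne⟩ := key
    set τ := Equiv.swap a b with hτ
    set τ' := Equiv.swap (g' a) (g' b) with hτ'
    have hconj : τ' = g' * τ * g'⁻¹ := Equiv.swap_apply_apply g' a b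
    have hττ : τ * τ = 1 := Equiv.swap_mul_self a b
    have hτ'τ' : τ' * τ' = 1 := Equiv.swap_mul_self _ _
    have hτ'G : τ' ∉ G := by
      intro hmem
      apply hτG
      have : g'⁻¹ * τ' * g' ∈ G := mul_mem (mul_mem (inv_mem hg'G) hmem) hg'G
      rwa [hconj, show g'⁻¹ * (g' * τ * g'⁻¹) * g' = τ by group] at this
    have hτ1 : τ ≠ 1 := by simpa [hτ, Equiv.swap_eq_one_iff] using hab
    have hτ'1 : τ' ≠ 1 := by
      simp only [hτ', Ne, Equiv.swap_eq_one_iff]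
      exact fun h => hab (g'.injective h)
    set y := Subgroup.closure {τ} with hy
    set z := Subgroup.closure {τ'} with hz
    have hjoin : G ⊔ y = G ⊔ z := by
      apply le_antisymm
      · apply sup_le le_sup_left
        rw [hy, Subgroup.closure_le]
        intro x hx
        simp only [Set.mem_singleton_iff] at hx
        subst hx
        have h1 : τ' ∈ G ⊔ z := le_sup_right (α := Subgroup _) (Subgroup.subset_closure rfl)
        have h2 : (g' : Perm (Fin n)) ∈ G ⊔ z := le_sup_left (α := Subgroup _) hg'G
        have : g'⁻¹ * τ' * g' ∈ G ⊔ z := mul_mem (mul_mem (inv_mem h2) h1) h2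
        rwa [hconj, show g'⁻¹ * (g' * τ * g'⁻¹) * g' = τ by group] at this
      · apply sup_le le_sup_left
        rw [hz, Subgroup.closure_le]
        intro x hx
        simp only [Set.mem_singleton_iff] at hx
        subst hx
        have h1 : τ ∈ G ⊔ y := le_sup_right (α := Subgroup _) (Subgroup.subset_closure rfl)
        have h2 : (g' : Perm (Fin n)) ∈ G ⊔ y := le_sup_left (α := Subgroup _) hg'G
        have : g' * τ * g'⁻¹ ∈ G ⊔ y := mul_mem (mul_mem h2 h1) (inv_mem h2)
        rwa [← hconj] at this
    have hmeet : G ⊓ y = G ⊓ z := by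
      have h1 : G ⊓ y = ⊥ := by
        rw [eq_bot_iff]
        rintro x ⟨hxG, hxy⟩
        rcases mem_closure_involution hττ hxy with rfl | rfl
        · exact Subgroup.one_mem _
        · exact absurd hxG hτG
      have h2 : G ⊓ z = ⊥ := by
        rw [eq_bot_iff]
        rintro x ⟨hxG, hxz⟩
        rcases mem_closure_involution hτ'τ' hxz with rfl | rfl
        · exact Subgroup.one_mem _
        · exact absurd hxG hτ'G
      rw [h1, h2]
    have := hc y z hjoin hmeet
    apply hτne
    have hmem : τ' ∈ y := this ▸ Subgroup.subset_closure rfl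
    rcases mem_closure_involution hττ hmem with h | h
    · exact absurd h hτ'1
    · exact h
  · rintro (rfl | rfl) y z hjoin hmeet
    · simpa using hjoin
    · simpa using hmeet
end

section
/- Every cancellable element of a lattice is a modular element: if x ∈ L satisfies the implication (x ⊔ y = x ⊔ z and x ⊓ y = x ⊓ z imply y = z) for all y, z ∈ L, then for all y, z ∈ L with y ≤ z one has (x ⊔ y) ⊓ z = (x ⊓ z) ⊔ y. -/
theorem stmt4 {L : Type*} [Lattice L] (x : L)
    (hcanc : ∀ y z : L, x ⊔ y = x ⊔ z → x ⊓ y = x ⊓ z → y = z) :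
    ∀ y z : L, y ≤ z → (x ⊔ y) ⊓ z = (x ⊓ z) ⊔ y := by
  intro y z hyz
  apply hcanc
  · have h1 : x ⊔ (x ⊔ y) ⊓ z = x ⊔ y := by
      apply le_antisymm
      · exact sup_le le_sup_left (inf_le_left)
      · exact sup_le le_sup_left (le_sup_of_le_right (le_inf le_sup_right hyz))
    have h2 : x ⊔ (x ⊓ z ⊔ y) = x ⊔ y := by
      apply le_antisymm
      · exact sup_le le_sup_left (sup_le (le_sup_of_le_left inf_le_left) le_sup_right)
      · exact sup_le le_sup_left (le_sup_of_le_right le_sup_right)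
    rw [h1, h2]
  · have h1 : x ⊓ ((x ⊔ y) ⊓ z) = x ⊓ z := by
      apply le_antisymm
      · exact le_inf inf_le_left (inf_le_right.trans inf_le_right)
      · exact le_inf inf_le_left (le_inf (inf_le_left.trans le_sup_left) inf_le_right)
    have h2 : x ⊓ (x ⊓ z ⊔ y) = x ⊓ z := by
      apply le_antisymm
      · exact le_inf inf_le_left (inf_le_right.trans (sup_le inf_le_right hyz))
      · exact le_inf inf_le_left le_sup_left
    rw [h1, h2]
end

section
/- If an element x of a lattice L is both a distributive element and a modular element, then x is a standard element: if x ⊔ (y ⊓ z) = (x ⊔ y) ⊓ (x ⊔ z) for all y, z ∈ L, and (x ⊔ y) ⊓ z = (x ⊓ z) ⊔ y for all y, z ∈ L with y ≤ z, then (x ⊔ y) ⊓ z = (x ⊓ z) ⊔ (y ⊓ z) for all y, z ∈ L. -/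
theorem stmt5 {L : Type*} [Lattice L] (x : L)
    (hdistr : ∀ y z : L, x ⊔ (y ⊓ z) = (x ⊔ y) ⊓ (x ⊔ z))
    (hmod : ∀ y z : L, y ≤ z → (x ⊔ y) ⊓ z = (x ⊓ z) ⊔ y) :
    ∀ y z : L, (x ⊔ y) ⊓ z = (x ⊓ z) ⊔ (y ⊓ z) := by
  intro y z
  have h := hmod (y ⊓ z) z inf_le_right
  rw [hdistr] at h
  rw [← h, inf_assoc, inf_of_le_right (le_sup_right : z ≤ x ⊔ z)]
end

section
/- Let F be the free semigroup over a countably infinite alphabet (say, over ℕ), and let u, v ∈ F be words with ℓ(u) = ℓ(v) and con(u) = con(v). If u ≤ v, that is, v = a·ξ(u)·b for some semigroup endomorphism ξ of F and some possibly empty words a, b, then u and v are equivalent, i.e., there exists a semigroup automorphism φ of F with φ(u) = v. (Equivalently: non-equivalent words with equal length and equal content are incomparable with respect to ≤.) -/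
/-- The content of a word in the free semigroup over ℕ: the set of letters occurring in it. -/
def con (u : FreeSemigroup ℕ) : Set ℕ := {x | x = u.head ∨ x ∈ u.tail}

/-- `wordLe u v` means `v = a·ξ(u)·b` for some semigroup endomorphism `ξ` of the free
semigroup and some possibly empty words `a`, `b`. -/
def wordLe (u v : FreeSemigroup ℕ) : Prop :=
  ∃ ξ : FreeSemigroup ℕ →ₙ* FreeSemigroup ℕ,
    v = ξ u ∨ (∃ a, v = a * ξ u) ∨ (∃ b, v = ξ u * b) ∨ (∃ a b, v = a * ξ u * b)

namespace FreeSemigroupAux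

open FreeSemigroup

lemma one_le_length (u : FreeSemigroup ℕ) : 1 ≤ u.length := Nat.succ_le_succ (Nat.zero_le _)

lemma length_le (ξ : FreeSemigroup ℕ →ₙ* FreeSemigroup ℕ) (u : FreeSemigroup ℕ) :
    u.length ≤ (ξ u).length := by
  induction u with
  | ih1 x => simpa using one_le_length (ξ (of x))
  | ih2 x y h1 h2 =>
    rw [map_mul]
    simp only [length_mul]
    exact Nat.add_le_add h1 h2

lemma con_of (x : ℕ) : con (of x) = {x} := by
  ext y; simp [con, of]

lemma con_mul (a b : FreeSemigroup ℕ) : con (a * b) = con a ∪ con b := by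
  ext y
  simp only [con, Set.mem_setOf_eq, tail_mul, head_mul, List.mem_append, List.mem_cons,
    Set.mem_union]
  tauto

lemma eq_of_length_one (w : FreeSemigroup ℕ) (h : w.length = 1) : w = of w.head := by
  have : w.tail = [] := List.length_eq_zero_iff.mp (Nat.succ_injective h)
  cases w; simp_all [of]

lemma key (ξ : FreeSemigroup ℕ →ₙ* FreeSemigroup ℕ) (u : FreeSemigroup ℕ)
    (h : (ξ u).length = u.length) :
    ξ u = FreeSemigroup.map (fun x => (ξ (of x)).head) u := by
  induction u with
  | ih1 x =>
    rw [map_of]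
    exact eq_of_length_one _ (by simpa using h)
  | ih2 x y h1 h2 =>
    rw [map_mul, map_mul] at *
    have hx := length_le ξ (of x)
    have hy := length_le ξ y
    simp only [length_mul] at h
    have ex : (ξ (of x)).length = (of x : FreeSemigroup ℕ).length := by omega
    have ey : (ξ y).length = y.length := by omega
    rw [h1 ex, h2 ey]

lemma con_map (σ : ℕ → ℕ) (u : FreeSemigroup ℕ) : con (FreeSemigroup.map σ u) = σ '' con u := by
  induction u with
  | ih1 x => rw [map_of, con_of, con_of, Set.image_singleton]
  | ih2 x y h1 h2 => rw [map_mul, con_mul, con_mul, h1, h2, Set.image_union]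

lemma map_congr (σ τ : ℕ → ℕ) (u : FreeSemigroup ℕ) (h : ∀ x ∈ con u, σ x = τ x) :
    FreeSemigroup.map σ u = FreeSemigroup.map τ u := by
  induction u with
  | ih1 x => rw [map_of, map_of, h x (by rw [con_of]; rfl)]
  | ih2 x y h1 h2 =>
    rw [map_mul, map_mul, h1, h2]
    · intro z hz; exact h z (by rw [con_mul]; exact Or.inr hz)
    · intro z hz; exact h z (by rw [con_mul]; exact Or.inl hz)

/-- map of an equiv as a MulEquiv -/
noncomputable def mapEquiv (e : ℕ ≃ ℕ) : FreeSemigroup ℕ ≃* FreeSemigroup ℕ where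
  toFun := FreeSemigroup.map e
  invFun := FreeSemigroup.map e.symm
  left_inv u := by
    induction u with
    | ih1 x => simp
    | ih2 x y h1 h2 => simp only [map_mul, h1, h2]
  right_inv u := by
    induction u with
    | ih1 x => simp
    | ih2 x y h1 h2 => simp only [map_mul, h1, h2]
  map_mul' := map_mul _

end FreeSemigroupAux

open FreeSemigroupAux FreeSemigroup in
theorem stmt6 (u v : FreeSemigroup ℕ) (hlen : u.length = v.length)
    (hcon : con u = con v) (hle : wordLe u v) :
    ∃ φ : FreeSemigroup ℕ ≃* FreeSemigroup ℕ, φ u = v := by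
  obtain ⟨ξ, hv⟩ := hle
  have hlu := length_le ξ u
  have hv' : v = ξ u := by
    rcases hv with h | ⟨a, h⟩ | ⟨b, h⟩ | ⟨a, b, h⟩
    · exact h
    · exfalso; have := one_le_length a; subst h; simp only [length_mul] at hlen; omega
    · exfalso; have := one_le_length b; subst h; simp only [length_mul] at hlen; omega
    · exfalso; have := one_le_length a; have := one_le_length b; subst h
      simp only [length_mul] at hlen; omega
  -- now v = ξ u with equal length
  set σ : ℕ → ℕ := fun x => (ξ (of x)).head with hσ
  have hlen' : (ξ u).length = u.length := by rw [← hv']; omega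
  have hmap : ξ u = FreeSemigroup.map σ u := key ξ u hlen'
  have hconv : σ '' con u = con u := by
    rw [← con_map σ u, ← hmap, ← hv', ← hcon]
  have hfin : (con u).Finite := by
    apply (List.finite_toSet (u.head :: u.tail)).subset
    intro x hx
    simpa [con] using hx
  have hmt : Set.MapsTo σ (con u) (con u) := fun x hx => hconv ▸ Set.mem_image_of_mem σ hx
  have hsurj : Set.SurjOn σ (con u) (con u) := hconv.ge
  have hbij : Set.BijOn σ (con u) (con u) :=
    (hfin.surjOn_iff_bijOn_of_mapsTo hmt).mp hsurj
  classical
  let e : Equiv.Perm ↥(con u) := hbij.equiv σ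
  let π : Equiv.Perm ℕ := e.extendDomain (Equiv.refl ↥(con u))
  have hπ : ∀ x ∈ con u, π x = σ x := by
    intro x hx
    have := Equiv.Perm.extendDomain_apply_subtype e (Equiv.refl ↥(con u)) hx
    exact this
  refine ⟨mapEquiv π, ?_⟩
  show FreeSemigroup.map (π : ℕ → ℕ) u = v
  rw [map_congr _ σ u hπ, ← hmap, hv']
end
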